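/- Let τ be a finite monadic vocabulary with |τ| = k, let T = {π₁,…,π_ℓ} be a set of τ-types, and let m₁ ≤ … ≤ m_r (r ≤ ℓ) be positive integers. Then there is an FO[τ] sentence χ of size at most 3·m_r + 6k·|T| − 2k such that for every τ-model M of size n ≥ m_r + 1 in which exactly the types of T are realized: M ⊨ χ iff for every i ∈ {1,…,r} at most m_i points of M realize π_i. -/

import Mathlib

/-!
Common definitions: unary (monadic) first-order structures, FO[τ] formulas in
negation normal form, formula size / quantifier rank / number of quantifiers,
semantics, description complexity, the equivalence `≡_d`, and the entropies.
-/

open Filter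

/-- A `τ`-model of size `n`: each point of the domain `{1,…,n}` (modelled as `Fin n`)
is assigned its `τ`-type, i.e. the set of unary predicates of `τ` that hold at it.
This is exactly the data of a structure `(M, P₁^M, …, P_k^M)` with `P_i^M ⊆ M`. -/
abbrev UModel (τ : Type) (n : ℕ) := Fin n → Set τ

/-- `|π|_M`: the number of points of `M` realizing the `τ`-type `π`. -/
noncomputable def typeCount {τ : Type} {n : ℕ} (M : UModel τ n) (π : Set τ) : ℕ :=
  Set.ncard {a : Fin n | M a = π}

/-- FO[τ] formulas in negation normal form: atomic formulas are `x = y`, `x ≠ y`,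
`P(x)` and `¬P(x)`; the connectives are `∧`, `∨` and the quantifiers `∃`, `∀`.
Variables are indexed by natural numbers. -/
inductive FO (τ : Type) : Type
  | eq : ℕ → ℕ → FO τ
  | ne : ℕ → ℕ → FO τ
  | pos : τ → ℕ → FO τ
  | npos : τ → ℕ → FO τ
  | and : FO τ → FO τ → FO τ
  | or : FO τ → FO τ → FO τ
  | ex : ℕ → FO τ → FO τ
  | all : ℕ → FO τ → FO τ

namespace FO

variable {τ : Type}

/-- The size of a formula: the number of atomic formulas, binary connectives
(`∧`, `∨`) and quantifiers occurring in it. -/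
def size : FO τ → ℕ
  | eq _ _ => 1
  | ne _ _ => 1
  | pos _ _ => 1
  | npos _ _ => 1
  | and φ ψ => φ.size + ψ.size + 1
  | or φ ψ => φ.size + ψ.size + 1
  | ex _ φ => φ.size + 1
  | all _ φ => φ.size + 1

/-- The quantifier rank: the maximum number of nested quantifiers. -/
def qrank : FO τ → ℕ
  | eq _ _ => 0
  | ne _ _ => 0
  | pos _ _ => 0
  | npos _ _ => 0
  | and φ ψ => max φ.qrank ψ.qrank
  | or φ ψ => max φ.qrank ψ.qrank
  | ex _ φ => φ.qrank + 1
  | all _ φ => φ.qrank + 1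

/-- The number of quantifier occurrences in a formula. -/
def qcount : FO τ → ℕ
  | eq _ _ => 0
  | ne _ _ => 0
  | pos _ _ => 0
  | npos _ _ => 0
  | and φ ψ => φ.qcount + ψ.qcount
  | or φ ψ => φ.qcount + ψ.qcount
  | ex _ φ => φ.qcount + 1
  | all _ φ => φ.qcount + 1

/-- The free variables of a formula. -/
def freeVars : FO τ → Finset ℕ
  | eq x y => {x, y}
  | ne x y => {x, y}
  | pos _ x => {x}
  | npos _ x => {x}
  | and φ ψ => φ.freeVars ∪ ψ.freeVars
  | or φ ψ => φ.freeVars ∪ ψ.freeVars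
  | ex x φ => φ.freeVars \ {x}
  | all x φ => φ.freeVars \ {x}

/-- A sentence is a formula with no free variables. -/
def IsSentence (φ : FO τ) : Prop := φ.freeVars = ∅

/-- Satisfaction of a formula in a model under a variable assignment. -/
def sat {n : ℕ} (M : UModel τ n) : (ℕ → Fin n) → FO τ → Prop
  | s, eq x y => s x = s y
  | s, ne x y => s x ≠ s y
  | s, pos P x => P ∈ M (s x)
  | s, npos P x => P ∉ M (s x)
  | s, and φ ψ => sat M s φ ∧ sat M s ψ
  | s, or φ ψ => sat M s φ ∨ sat M s ψ
  | s, ex x φ => ∃ a : Fin n, sat M (Function.update s x a) φ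
  | s, all x φ => ∀ a : Fin n, sat M (Function.update s x a) φ

end FO

/-- Truth of a formula in a model (for sentences, independent of the assignment). -/
def Sat {τ : Type} {n : ℕ} (M : UModel τ n) (φ : FO τ) : Prop :=
  ∀ s : ℕ → Fin n, FO.sat M s φ

/-- Two `τ`-models of size `n` are isomorphic iff every `τ`-type is realized by
the same number of points in both. -/
def Iso {τ : Type} {n : ℕ} (M M' : UModel τ n) : Prop :=
  ∀ π : Set τ, typeCount M π = typeCount M' π

/-- A sentence `φ` defines the model `M` (among `τ`-models of size `n`) if the
models of size `n` satisfying `φ` are exactly those isomorphic to `M`. -/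
def Defines {τ : Type} {n : ℕ} (φ : FO τ) (M : UModel τ n) : Prop :=
  ∀ M' : UModel τ n, Sat M' φ ↔ Iso M' M

/-- The description complexity `C(M)`: the size of the smallest FO[τ] sentence
defining `M` among `τ`-models of the same size. -/
noncomputable def descComp {τ : Type} {n : ℕ} (M : UModel τ n) : ℕ :=
  sInf {s : ℕ | ∃ φ : FO τ, φ.IsSentence ∧ Defines φ M ∧ φ.size = s}

/-- The constant `c_τ := 15|τ|·2^{|τ|}`. -/
def cTau (τ : Type) [Fintype τ] : ℕ := 15 * Fintype.card τ * 2 ^ Fintype.card τ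

/-- `M ≡_d M'`: every `τ`-type realized fewer than `d` times in one of the models
is realized exactly the same number of times in both; equivalently, the counts of
realizing points truncated at `d` coincide for all types. -/
def EquivD {τ : Type} {n : ℕ} (d : ℕ) (M M' : UModel τ n) : Prop :=
  ∀ π : Set τ, min (typeCount M π) d = min (typeCount M' π) d

/-- `φ` defines the `≡_d`-equivalence class of `M`: the size-`n` models satisfying
`φ` are exactly those `≡_d`-equivalent to `M`. -/
def DefinesD {τ : Type} {n : ℕ} (d : ℕ) (φ : FO τ) (M : UModel τ n) : Prop :=
  ∀ M' : UModel τ n, Sat M' φ ↔ EquivD d M' M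

/-- The `d`-description complexity `C_d(M)`: the size of the smallest FO_d[τ]
sentence (quantifier rank at most `d`) true exactly in the size-`n` models
`≡_d`-equivalent to `M`. -/
noncomputable def descCompD {τ : Type} {n : ℕ} (d : ℕ) (M : UModel τ n) : ℕ :=
  sInf {s : ℕ | ∃ φ : FO τ, φ.IsSentence ∧ φ.qrank ≤ d ∧ DefinesD d φ M ∧ φ.size = s}

/-- The Shannon entropy `H_S(M) = Σ_π −(|π|_M/n)·log₂(|π|_M/n)` (terms with
`|π|_M = 0` vanish, as `Real.logb 2 0 = 0`). -/
noncomputable def HS {τ : Type} [Fintype τ] {n : ℕ} (M : UModel τ n) : ℝ :=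
  ∑ π : Set τ, -((typeCount M π : ℝ) / n) * Real.logb 2 ((typeCount M π : ℝ) / n)

/-- The Boltzmann entropy `H_B(M)`: `log₂` of the number of `τ`-models with the
same domain that are isomorphic to `M`. -/
noncomputable def HB {τ : Type} {n : ℕ} (M : UModel τ n) : ℝ :=
  Real.logb 2 (Nat.card {M' : UModel τ n // Iso M' M})

/-- The Boltzmann entropy with respect to `≡_d`: `log₂` of the number of
`τ`-models with the same domain that are `≡_d`-equivalent to `M`. -/
noncomputable def HBd {τ : Type} {n : ℕ} (d : ℕ) (M : UModel τ n) : ℝ :=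
  Real.logb 2 (Nat.card {M' : UModel τ n // EquivD d M' M})

namespace AtMostAux
variable {τ : Type}

/-- `l₁ ∨ (l₂ ∨ (⋯ ∨ b))` -/
def disjL : List (FO τ) → FO τ → FO τ
  | [], b => b
  | φ :: l, b => .or φ (disjL l b)

/-- `l₁ ∧ (l₂ ∧ (⋯ ∧ b))` -/
def conjL : List (FO τ) → FO τ → FO τ
  | [], b => b
  | φ :: l, b => .and φ (conjL l b)

@[simp] lemma size_disjL (l : List (FO τ)) (b : FO τ) :
    (disjL l b).size = (l.map (fun φ => φ.size + 1)).sum + b.size := by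
  induction l with
  | nil => simp [disjL]
  | cons φ l ih => simp [disjL, FO.size, ih]; omega

@[simp] lemma size_conjL (l : List (FO τ)) (b : FO τ) :
    (conjL l b).size = (l.map (fun φ => φ.size + 1)).sum + b.size := by
  induction l with
  | nil => simp [conjL]
  | cons φ l ih => simp [conjL, FO.size, ih]; omega

lemma sat_disjL {n : ℕ} (M : UModel τ n) (s : ℕ → Fin n) (l : List (FO τ)) (b : FO τ) :
    FO.sat M s (disjL l b) ↔ (∃ φ ∈ l, FO.sat M s φ) ∨ FO.sat M s b := by
  induction l with
  | nil => simp [disjL]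
  | cons φ l ih =>
    simp only [disjL, FO.sat, ih, List.mem_cons]
    aesop

lemma sat_conjL {n : ℕ} (M : UModel τ n) (s : ℕ → Fin n) (l : List (FO τ)) (b : FO τ) :
    FO.sat M s (conjL l b) ↔ (∀ φ ∈ l, FO.sat M s φ) ∧ FO.sat M s b := by
  induction l with
  | nil => simp [conjL]
  | cons φ l ih =>
    simp only [conjL, FO.sat, ih, List.mem_cons]
    aesop

lemma freeVars_disjL (l : List (FO τ)) (b : FO τ) {v : ℕ} (hv : v ∈ (disjL l b).freeVars) :
    (∃ φ ∈ l, v ∈ φ.freeVars) ∨ v ∈ b.freeVars := by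
  induction l with
  | nil => exact Or.inr hv
  | cons φ l ih =>
    simp only [disjL, FO.freeVars, Finset.mem_union] at hv
    rcases hv with h | h
    · exact Or.inl ⟨φ, by simp, h⟩
    · rcases ih h with ⟨ψ, hψ, hv⟩ | h
      · exact Or.inl ⟨ψ, by simp [hψ], hv⟩
      · exact Or.inr h

lemma freeVars_conjL (l : List (FO τ)) (b : FO τ) {v : ℕ} (hv : v ∈ (conjL l b).freeVars) :
    (∃ φ ∈ l, v ∈ φ.freeVars) ∨ v ∈ b.freeVars := by
  induction l with
  | nil => exact Or.inr hv
  | cons φ l ih =>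
    simp only [conjL, FO.freeVars, Finset.mem_union] at hv
    rcases hv with h | h
    · exact Or.inl ⟨φ, by simp, h⟩
    · rcases ih h with ⟨ψ, hψ, hv⟩ | h
      · exact Or.inl ⟨ψ, by simp [hψ], hv⟩
      · exact Or.inr h


open Classical in
/-- atom of a type description -/
noncomputable def tlit (σ : Set τ) (v : ℕ) (P : τ) : FO τ :=
  if P ∈ σ then .pos P v else .npos P v

open Classical in
noncomputable def tlitN (σ : Set τ) (v : ℕ) (P : τ) : FO τ :=
  if P ∈ σ then .npos P v else .pos P v

/-- the type formula `θ_σ(v)` (as conjunction over a list of predicates) -/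
noncomputable def typeP (σ : Set τ) (v : ℕ) : List τ → FO τ
  | [] => .eq v v
  | P :: L => conjL (L.map (tlit σ v)) (tlit σ v P)

/-- the negated type formula (disjunction of negated atoms) -/
noncomputable def typeN (σ : Set τ) (v : ℕ) : List τ → FO τ
  | [] => .ne v v
  | P :: L => disjL (L.map (tlitN σ v)) (tlitN σ v P)

@[simp] lemma size_tlit (σ : Set τ) (v : ℕ) (P : τ) : (tlit σ v P).size = 1 := by
  unfold tlit; split <;> rfl

@[simp] lemma size_tlitN (σ : Set τ) (v : ℕ) (P : τ) : (tlitN σ v P).size = 1 := by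
  unfold tlitN; split <;> rfl

lemma size_typeP (σ : Set τ) (v : ℕ) (L : List τ) (h : L ≠ []) :
    (typeP σ v L).size = 2 * L.length - 1 := by
  match L with
  | [] => simp at h
  | P :: L =>
    simp [typeP, FO.size, List.map_map, Function.comp_def]
    omega

lemma size_typeN (σ : Set τ) (v : ℕ) (L : List τ) (h : L ≠ []) :
    (typeN σ v L).size = 2 * L.length - 1 := by
  match L with
  | [] => simp at h
  | P :: L =>
    simp [typeN, FO.size, List.map_map, Function.comp_def]
    omega

lemma freeVars_tlit (σ : Set τ) (v : ℕ) (P : τ) : (tlit σ v P).freeVars = {v} := by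
  unfold tlit; split <;> rfl

lemma freeVars_tlitN (σ : Set τ) (v : ℕ) (P : τ) : (tlitN σ v P).freeVars = {v} := by
  unfold tlitN; split <;> rfl

lemma freeVars_typeP (σ : Set τ) (v : ℕ) (L : List τ) {w : ℕ}
    (hw : w ∈ (typeP σ v L).freeVars) : w = v := by
  match L with
  | [] => simp [typeP, FO.freeVars] at hw; omega
  | P :: L =>
    rcases freeVars_conjL _ _ hw with ⟨φ, hφ, hv⟩ | hv
    · simp only [List.mem_map] at hφ
      obtain ⟨Q, _, rfl⟩ := hφ
      simpa [freeVars_tlit] using hv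
    · simpa [freeVars_tlit] using hv

lemma freeVars_typeN (σ : Set τ) (v : ℕ) (L : List τ) {w : ℕ}
    (hw : w ∈ (typeN σ v L).freeVars) : w = v := by
  match L with
  | [] => simp [typeN, FO.freeVars] at hw; omega
  | P :: L =>
    rcases freeVars_disjL _ _ hw with ⟨φ, hφ, hv⟩ | hv
    · simp only [List.mem_map] at hφ
      obtain ⟨Q, _, rfl⟩ := hφ
      simpa [freeVars_tlitN] using hv
    · simpa [freeVars_tlitN] using hv

lemma sat_tlit {n : ℕ} (M : UModel τ n) (s : ℕ → Fin n) (σ : Set τ) (v : ℕ) (P : τ) :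
    FO.sat M s (tlit σ v P) ↔ (P ∈ M (s v) ↔ P ∈ σ) := by
  unfold tlit; split <;> simp [FO.sat] <;> tauto

lemma sat_tlitN {n : ℕ} (M : UModel τ n) (s : ℕ → Fin n) (σ : Set τ) (v : ℕ) (P : τ) :
    FO.sat M s (tlitN σ v P) ↔ ¬(P ∈ M (s v) ↔ P ∈ σ) := by
  unfold tlitN; split <;> simp [FO.sat] <;> tauto

lemma sat_typeP {n : ℕ} [Fintype τ] (M : UModel τ n) (s : ℕ → Fin n) (σ : Set τ) (v : ℕ)
    (hL : (Finset.univ.toList : List τ).length = Fintype.card τ := Finset.length_toList _) :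
    FO.sat M s (typeP σ v (Finset.univ.toList : List τ)) ↔ M (s v) = σ := by
  have hmem : ∀ P : τ, P ∈ (Finset.univ.toList : List τ) := by
    intro P; simp [Finset.mem_toList]
  constructor
  · intro h
    ext P
    match hLl : (Finset.univ.toList : List τ) with
    | [] => exact absurd (hmem P) (by simp [hLl])
    | Q :: L =>
      rw [hLl] at h
      simp only [typeP] at h
      rw [sat_conjL] at h
      have hP := hmem P
      rw [hLl] at hP
      rcases List.mem_cons.mp hP with rfl | hP
      · exact (sat_tlit M s σ v P).mp h.2
      · exact (sat_tlit M s σ v P).mp (h.1 _ (List.mem_map_of_mem hP))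
  · intro h
    match hLl : (Finset.univ.toList : List τ) with
    | [] => simp [typeP, FO.sat]
    | Q :: L =>
      simp only [typeP]
      rw [sat_conjL]
      refine ⟨?_, (sat_tlit M s σ v Q).mpr (by rw [h])⟩
      intro φ hφ
      simp only [List.mem_map] at hφ
      obtain ⟨P, _, rfl⟩ := hφ
      exact (sat_tlit M s σ v P).mpr (by rw [h])

lemma sat_typeN {n : ℕ} [Fintype τ] (M : UModel τ n) (s : ℕ → Fin n) (σ : Set τ) (v : ℕ) :
    FO.sat M s (typeN σ v (Finset.univ.toList : List τ)) ↔ M (s v) ≠ σ := by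
  have hmem : ∀ P : τ, P ∈ (Finset.univ.toList : List τ) := by
    intro P; simp [Finset.mem_toList]
  constructor
  · intro h hMσ
    match hLl : (Finset.univ.toList : List τ) with
    | [] => rw [hLl] at h; simp [typeN, FO.sat] at h
    | Q :: L =>
      rw [hLl] at h
      simp only [typeN] at h
      rw [sat_disjL] at h
      rcases h with ⟨φ, hφ, hφs⟩ | hφs
      · simp only [List.mem_map] at hφ
        obtain ⟨P, _, rfl⟩ := hφ
        exact (sat_tlitN M s σ v P).mp hφs (by rw [hMσ])
      · exact (sat_tlitN M s σ v Q).mp hφs (by rw [hMσ])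
  · intro h
    have : ∃ P : τ, ¬(P ∈ M (s v) ↔ P ∈ σ) := by
      by_contra hc
      push_neg at hc
      exact h (Set.ext fun P => hc P)
    obtain ⟨P, hP⟩ := this
    match hLl : (Finset.univ.toList : List τ) with
    | [] => exact absurd (hmem P) (by simp [hLl])
    | Q :: L =>
      simp only [typeN]
      rw [sat_disjL]
      have hPQ := hmem P
      rw [hLl] at hPQ
      rcases List.mem_cons.mp hPQ with rfl | hPL
      · exact Or.inr ((sat_tlitN M s σ v P).mpr hP)
      · exact Or.inl ⟨_, List.mem_map_of_mem hPL, (sat_tlitN M s σ v P).mpr hP⟩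

/-- `exs t φ = ∃ x_{t+1} … ∃ x_2, φ` (binds variables `2,…,t+1`). -/
def exs : ℕ → FO τ → FO τ
  | 0, φ => φ
  | t + 1, φ => .ex (t + 2) (exs t φ)

@[simp] lemma size_exs (t : ℕ) (φ : FO τ) : (exs t φ).size = t + φ.size := by
  induction t with
  | zero => simp [exs]
  | succ t ih => simp [exs, FO.size, ih]; omega

lemma freeVars_exs (t : ℕ) (φ : FO τ) {v : ℕ} (hv : v ∈ (exs t φ).freeVars) :
    v ∈ φ.freeVars ∧ (v < 2 ∨ t + 2 ≤ v) := by
  induction t with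
  | zero => exact ⟨hv, by omega⟩
  | succ t ih =>
    simp only [exs, FO.freeVars, Finset.mem_sdiff, Finset.mem_singleton] at hv
    obtain ⟨hv1, hv2⟩ := hv
    obtain ⟨h1, h2⟩ := ih hv1
    exact ⟨h1, by omega⟩

lemma sat_exs_intro {n : ℕ} (M : UModel τ n) (t : ℕ) (φ : FO τ) (s s' : ℕ → Fin n)
    (hlo : ∀ v, v < 2 → s' v = s v) (hhi : ∀ v, t + 2 ≤ v → s' v = s v)
    (hs : FO.sat M s' φ) : FO.sat M s (exs t φ) := by
  induction t generalizing s with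
  | zero =>
    have : s' = s := funext fun v => by rcases lt_or_ge v 2 with h | h; exacts [hlo v h, hhi v h]
    rwa [← this]
  | succ t ih =>
    refine ⟨s' (t + 2), ?_⟩
    apply ih
    · intro v hv
      rw [Function.update_of_ne (by omega), hlo v hv]
    · intro v hv
      rcases eq_or_ne v (t + 2) with rfl | hne
      · simp
      · rw [Function.update_of_ne hne, hhi v (by omega)]

lemma sat_exs_elim {n : ℕ} (M : UModel τ n) (t : ℕ) (φ : FO τ) (s : ℕ → Fin n)
    (hs : FO.sat M s (exs t φ)) :
    ∃ s' : ℕ → Fin n, (∀ v, v < 2 → s' v = s v) ∧ (∀ v, t + 2 ≤ v → s' v = s v) ∧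
      FO.sat M s' φ := by
  induction t generalizing s with
  | zero => exact ⟨s, fun _ _ => rfl, fun _ _ => rfl, hs⟩
  | succ t ih =>
    obtain ⟨a, ha⟩ := hs
    obtain ⟨s', h1, h2, h3⟩ := ih _ ha
    refine ⟨s', ?_, ?_, h3⟩
    · intro v hv
      rw [h1 v hv, Function.update_of_ne (by omega)]
    · intro v hv
      rw [h2 v (by omega), Function.update_of_ne (by omega)]


def startIdx (mm : ℕ → ℕ) (i : ℕ) : ℕ := if i = 0 then 0 else mm (i - 1)

lemma startIdx_le (mm : ℕ → ℕ) (hmono : Monotone mm) (i : ℕ) : startIdx mm i ≤ mm i := by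
  unfold startIdx
  split
  · omega
  · exact hmono (by omega)

lemma startIdx_mono (mm : ℕ → ℕ) (hmono : Monotone mm) : Monotone (startIdx mm) := by
  intro a b hab
  unfold startIdx
  split
  · omega
  · split
    · omega
    · exact hmono (by omega)

def eqsL (mm : ℕ → ℕ) (i : ℕ) : List (FO τ) :=
  (List.range' (startIdx mm i) (mm i - startIdx mm i)).map (fun j => FO.eq 1 (j + 2))

lemma mem_eqsL (mm : ℕ → ℕ) (i : ℕ) {φ : FO τ} (hφ : φ ∈ eqsL mm i) :
    ∃ j, startIdx mm i ≤ j ∧ j < max (mm i) (startIdx mm i) ∧ φ = FO.eq 1 (j + 2) := by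
  simp only [eqsL, List.mem_map, List.mem_range'_1] at hφ
  obtain ⟨j, ⟨h1, h2⟩, rfl⟩ := hφ
  exact ⟨j, h1, by omega, rfl⟩

lemma eqsL_mem (mm : ℕ → ℕ) (i j : ℕ) (h1 : startIdx mm i ≤ j) (h2 : j < mm i) :
    (FO.eq 1 (j + 2) : FO τ) ∈ (eqsL mm i : List (FO τ)) := by
  simp only [eqsL, List.mem_map, List.mem_range'_1]
  exact ⟨j, ⟨h1, by omega⟩, rfl⟩

lemma size_eqsL_sum (mm : ℕ → ℕ) (i : ℕ) :
    (((eqsL mm i : List (FO τ))).map (fun φ => (FO.size φ) + 1)).sum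
      = 2 * (mm i - startIdx mm i) := by
  simp only [eqsL, List.map_map]
  have : ((fun φ => FO.size φ + 1) ∘ fun j => (FO.eq 1 (j + 2) : FO τ)) =
      (fun (_ : ℕ) => 2) := by
    funext j
    rfl
  rw [this, List.map_const', List.sum_replicate]
  simp [List.length_range']
  omega

variable [Fintype τ]

/-- The matrix of the formula, level `r-1-d` counted by `d` downwards;
`mat … d` is the level-`(r-1-d)` subformula `M_{r-1-d}`. -/
noncomputable def mat (PP : ℕ → Set τ) (mm : ℕ → ℕ) (r ℓ : ℕ) : ℕ → FO τ
  | 0 => disjL (eqsL mm (r - 1) ++ (List.range (ℓ - r)).map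
            (fun t => typeP (PP (r + t)) 0 (Finset.univ.toList : List τ)))
          (typeN (PP (r - 1)) 1 (Finset.univ.toList : List τ))
  | d + 1 => disjL (eqsL mm (r - 2 - d))
      (.or (.and (typeP (PP (r - 2 - d)) 0 (Finset.univ.toList : List τ))
                 (typeN (PP (r - 2 - d)) 1 (Finset.univ.toList : List τ)))
           (.and (typeN (PP (r - 2 - d)) 0 (Finset.univ.toList : List τ))
                 (mat PP mm r ℓ d)))

noncomputable def chi (PP : ℕ → Set τ) (mm : ℕ → ℕ) (r ℓ : ℕ) : FO τ :=
  .all 0 (exs (mm (r - 1)) (.all 1 (mat PP mm r ℓ (r - 1))))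

lemma size_mat (PP : ℕ → Set τ) (mm : ℕ → ℕ) (r ℓ : ℕ)
    (hk : 1 ≤ Fintype.card τ) (hmono : Monotone mm) (hr : 1 ≤ r) :
    ∀ d, d ≤ r - 1 →
      (mat PP mm r ℓ d).size = 2 * mm (r - 1) - 2 * startIdx mm (r - 1 - d)
        + 6 * Fintype.card τ * d + 2 * Fintype.card τ * (ℓ - r) + 2 * Fintype.card τ - 1 := by
  have hLne : (Finset.univ.toList : List τ) ≠ [] := by
    intro h
    have := Finset.length_toList (Finset.univ : Finset τ)
    rw [h] at this
    simp at this
    omega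
  have hLlen : (Finset.univ.toList : List τ).length = Fintype.card τ :=
    Finset.length_toList _
  intro d
  induction d with
  | zero =>
    intro _
    simp only [mat, size_disjL, List.map_append, List.sum_append]
    rw [size_eqsL_sum]
    rw [size_typeN _ _ _ hLne]
    have hU : (((List.range (ℓ - r)).map
        (fun t => typeP (PP (r + t)) 0 (Finset.univ.toList : List τ))).map
        (fun φ => FO.size φ + 1)).sum = 2 * Fintype.card τ * (ℓ - r) := by
      rw [List.map_map]
      have : ((List.range (ℓ - r)).map ((fun φ => FO.size φ + 1) ∘
          (fun t => typeP (PP (r + t)) 0 (Finset.univ.toList : List τ)))) =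
          (List.range (ℓ - r)).map (fun _ => 2 * Fintype.card τ) := by
        apply List.map_congr_left
        intro t _
        simp only [Function.comp_apply]
        rw [size_typeP _ _ _ hLne, hLlen]
        omega
      rw [this, List.map_const', List.sum_replicate]
      simp [List.length_range]
      ring
    rw [hU, hLlen]
    have h1 : startIdx mm (r - 1) ≤ mm (r - 1) := startIdx_le mm hmono _
    simp only [Nat.sub_zero, Nat.mul_zero]
    omega
  | succ d ih =>
    intro hd
    have hdr : d ≤ r - 1 := by omega
    simp only [mat, size_disjL, FO.size]
    rw [size_eqsL_sum]
    rw [size_typeP _ _ _ hLne, size_typeN _ _ _ hLne, size_typeN _ _ _ hLne, ih hdr, hLlen]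
    have h1 : startIdx mm (r - 1 - d) = mm (r - 2 - d) := by
      have : r - 1 - d ≠ 0 := by omega
      unfold startIdx
      rw [if_neg this]
      congr 1
      omega
    have h2 : startIdx mm (r - 2 - d) ≤ mm (r - 2 - d) := startIdx_le mm hmono _
    have h3 : mm (r - 2 - d) ≤ mm (r - 1) := hmono (by omega)
    have h4 : r - 1 - (d + 1) = r - 2 - d := by omega
    rw [h4]
    have hk2 : 2 ≤ 2 * Fintype.card τ := by omega
    have h5 : 6 * Fintype.card τ * (d + 1) = 6 * Fintype.card τ * d + 6 * Fintype.card τ := by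
      ring
    omega

lemma freeVars_mat (PP : ℕ → Set τ) (mm : ℕ → ℕ) (r ℓ : ℕ) (hmono : Monotone mm)
    (hr : 1 ≤ r) :
    ∀ d, d ≤ r - 1 → ∀ v ∈ (mat PP mm r ℓ d).freeVars,
      v = 0 ∨ v = 1 ∨ (2 ≤ v ∧ v < mm (r - 1) + 2) := by
  intro d
  induction d with
  | zero =>
    intro _ v hv
    rcases freeVars_disjL _ _ hv with ⟨φ, hφ, hvφ⟩ | hvb
    · rcases List.mem_append.mp hφ with hφ | hφ
      · obtain ⟨j, hj1, hj2, rfl⟩ := mem_eqsL mm _ hφ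
        have hs : startIdx mm (r - 1) ≤ mm (r - 1) := startIdx_le mm hmono _
        simp only [FO.freeVars, Finset.mem_insert, Finset.mem_singleton] at hvφ
        rcases hvφ with rfl | rfl
        · right; left; rfl
        · right; right; omega
      · simp only [List.mem_map] at hφ
        obtain ⟨t, _, rfl⟩ := hφ
        exact Or.inl (freeVars_typeP _ _ _ hvφ)
    · exact Or.inr (Or.inl (freeVars_typeN _ _ _ hvb))
  | succ d ih =>
    intro hd v hv
    rcases freeVars_disjL _ _ hv with ⟨φ, hφ, hvφ⟩ | hvb
    · obtain ⟨j, hj1, hj2, rfl⟩ := mem_eqsL mm _ hφ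
      have hs : startIdx mm (r - 2 - d) ≤ mm (r - 2 - d) := startIdx_le mm hmono _
      have h3 : mm (r - 2 - d) ≤ mm (r - 1) := hmono (by omega)
      simp only [FO.freeVars, Finset.mem_insert, Finset.mem_singleton] at hvφ
      rcases hvφ with rfl | rfl
      · right; left; rfl
      · right; right; omega
    · simp only [FO.freeVars, Finset.mem_union] at hvb
      rcases hvb with (h | h) | (h | h)
      · exact Or.inl (freeVars_typeP _ _ _ h)
      · exact Or.inr (Or.inl (freeVars_typeN _ _ _ h))
      · exact Or.inl (freeVars_typeN _ _ _ h)
      · exact ih (by omega) v h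


lemma sat_mat_extract {n : ℕ} (M : UModel τ n) (PP : ℕ → Set τ) (mm : ℕ → ℕ) (r ℓ : ℕ)
    (hinjP : ∀ a b, a < ℓ → b < ℓ → PP a = PP b → a = b)
    (hmono : Monotone mm) (hr : 1 ≤ r) (hrℓ : r ≤ ℓ) :
    ∀ d, d ≤ r - 1 → ∀ (s : ℕ → Fin n) (i0 : ℕ), i0 < r →
      M (s 0) = PP i0 → M (s 1) = PP i0 → r - 1 - d ≤ i0 →
      FO.sat M s (mat PP mm r ℓ d) →
      ∃ j, startIdx mm (r - 1 - d) ≤ j ∧ j < mm i0 ∧ s 1 = s (j + 2) := by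
  intro d
  induction d with
  | zero =>
    intro _ s i0 hi0 hy hz hle hsat
    have hi0' : i0 = r - 1 := by omega
    subst hi0'
    simp only [mat] at hsat
    rcases (sat_disjL M s _ _).mp hsat with ⟨φ, hφ, hφs⟩ | hb
    · rcases List.mem_append.mp hφ with hφ | hφ
      · obtain ⟨j, hj1, hj2, rfl⟩ := mem_eqsL mm _ hφ
        have hs : startIdx mm (r - 1) ≤ mm (r - 1) := startIdx_le mm hmono _
        refine ⟨j, by simpa using hj1, by omega, hφs⟩
      · simp only [List.mem_map, List.mem_range] at hφ
        obtain ⟨t, ht, rfl⟩ := hφ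
        rw [sat_typeP] at hφs
        rw [hy] at hφs
        have := hinjP (r - 1) (r + t) (by omega) (by omega) hφs
        omega
    · rw [sat_typeN] at hb
      exact absurd hz hb
  | succ d ih =>
    intro hd s i0 hi0 hy hz hle hsat
    simp only [mat] at hsat
    have hlev : r - 1 - (d + 1) = r - 2 - d := by omega
    rcases (sat_disjL M s _ _).mp hsat with ⟨φ, hφ, hφs⟩ | hb
    · obtain ⟨j, hj1, hj2, rfl⟩ := mem_eqsL mm _ hφ
      have hs : startIdx mm (r - 2 - d) ≤ mm (r - 2 - d) := startIdx_le mm hmono _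
      have h3 : mm (r - 2 - d) ≤ mm i0 := hmono (by omega)
      exact ⟨j, by rw [hlev]; exact hj1, by omega, hφs⟩
    · rcases hb with ⟨hP, hN⟩ | ⟨hN, hmat⟩
      · rw [sat_typeP] at hP
        rw [sat_typeN] at hN
        rw [hy] at hP
        have : i0 = r - 2 - d := hinjP i0 (r - 2 - d) (by omega) (by omega) hP
        rw [← this] at hN
        exact absurd hz hN
      · rw [sat_typeN] at hN
        rw [hy] at hN
        have hne : i0 ≠ r - 2 - d := fun h => hN (by rw [h])
        have hle' : r - 1 - d ≤ i0 := by omega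
        obtain ⟨j, hj1, hj2, hj3⟩ := ih (by omega) s i0 hi0 hy hz hle' hmat
        refine ⟨j, ?_, hj2, hj3⟩
        calc startIdx mm (r - 1 - (d + 1)) ≤ startIdx mm (r - 1 - d) :=
              startIdx_mono mm hmono (by omega)
          _ ≤ j := hj1

lemma sat_mat_intro {n : ℕ} (M : UModel τ n) (PP : ℕ → Set τ) (mm : ℕ → ℕ) (r ℓ : ℕ)
    (hinjP : ∀ a b, a < ℓ → b < ℓ → PP a = PP b → a = b)
    (hmono : Monotone mm) (hr : 1 ≤ r) (hrℓ : r ≤ ℓ) :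
    ∀ d, d ≤ r - 1 → ∀ s : ℕ → Fin n,
      ((∃ p, r - 1 - d ≤ p ∧ p < r ∧ M (s 0) = PP p ∧
         (M (s 1) ≠ PP p ∨ ∃ j, startIdx mm (r - 1 - d) ≤ j ∧ j < mm p ∧ s 1 = s (j + 2)))
       ∨ (∃ q, r ≤ q ∧ q < ℓ ∧ M (s 0) = PP q))
      → FO.sat M s (mat PP mm r ℓ d) := by
  intro d
  induction d with
  | zero =>
    intro _ s hc
    simp only [mat]
    rw [sat_disjL]
    rcases hc with ⟨p, hp1, hp2, hy, hcond⟩ | ⟨q, hq1, hq2, hy⟩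
    · have hp : p = r - 1 := by omega
      subst hp
      rcases hcond with hne | ⟨j, hj1, hj2, hj3⟩
      · exact Or.inr ((sat_typeN M s _ 1).mpr hne)
      · refine Or.inl ⟨FO.eq 1 (j + 2), List.mem_append.mpr (Or.inl ?_), hj3⟩
        exact eqsL_mem mm (r - 1) j (by simpa using hj1) hj2
    · refine Or.inl ⟨typeP (PP (r + (q - r))) 0 (Finset.univ.toList : List τ),
        List.mem_append.mpr (Or.inr ?_), ?_⟩
      · exact List.mem_map_of_mem (List.mem_range.mpr (by omega))
      · rw [sat_typeP]
        rw [hy]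
        rw [show r + (q - r) = q by omega]
  | succ d ih =>
    intro hd s hc
    simp only [mat]
    rw [sat_disjL]
    have hlev : r - 1 - (d + 1) = r - 2 - d := by omega
    rcases hc with ⟨p, hp1, hp2, hy, hcond⟩ | ⟨q, hq1, hq2, hy⟩
    · rw [hlev] at hp1
      rcases eq_or_lt_of_le hp1 with rfl | hplt
      · -- p is this level
        rcases hcond with hne | ⟨j, hj1, hj2, hj3⟩
        · refine Or.inr (Or.inl ⟨(sat_typeP M s _ 0).mpr hy, (sat_typeN M s _ 1).mpr hne⟩)
        · refine Or.inl ⟨FO.eq 1 (j + 2), ?_, hj3⟩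
          exact eqsL_mem mm _ j (by rw [← hlev]; exact hj1) hj2
      · -- p is deeper; descend unless the slot is in this level's block
        have hyne : M (s 0) ≠ PP (r - 2 - d) := by
          rw [hy]
          intro h
          have := hinjP p (r - 2 - d) (by omega) (by omega) h
          omega
        have hnext : startIdx mm (r - 1 - d) = mm (r - 2 - d) := by
          have h0 : r - 1 - d ≠ 0 := by omega
          have h1 : r - 1 - d - 1 = r - 2 - d := by omega
          unfold startIdx
          rw [if_neg h0, h1]
        rcases hcond with hne | ⟨j, hj1, hj2, hj3⟩
        · refine Or.inr (Or.inr ⟨(sat_typeN M s _ 0).mpr hyne, ?_⟩)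
          exact ih (by omega) s (Or.inl ⟨p, by omega, hp2, hy, Or.inl hne⟩)
        · rcases lt_or_ge j (mm (r - 2 - d)) with hjlt | hjge
          · refine Or.inl ⟨FO.eq 1 (j + 2), ?_, hj3⟩
            exact eqsL_mem mm _ j (by rw [← hlev]; exact hj1) hjlt
          · refine Or.inr (Or.inr ⟨(sat_typeN M s _ 0).mpr hyne, ?_⟩)
            refine ih (by omega) s (Or.inl ⟨p, by omega, hp2, hy, Or.inr ⟨j, ?_, hj2, hj3⟩⟩)
            rw [hnext]
            exact hjge
    · refine Or.inr (Or.inr ⟨?_, ih (by omega) s (Or.inr ⟨q, hq1, hq2, hy⟩)⟩)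
      apply (sat_typeN M s _ 0).mpr
      rw [hy]
      intro h
      have := hinjP q (r - 2 - d) (by omega) (by omega) h
      omega


lemma ncard_le_of_cover {n t : ℕ} (S : Set (Fin n)) (g : Fin t → Fin n)
    (h : ∀ z ∈ S, ∃ j, g j = z) : S.ncard ≤ t := by
  have h1 : S ⊆ Set.range g := fun z hz => (h z hz).imp (fun j hj => hj)
  calc S.ncard ≤ (Set.range g).ncard := Set.ncard_le_ncard h1 (Set.finite_range g)
    _ = (g '' Set.univ).ncard := by rw [Set.image_univ]
    _ ≤ (Set.univ : Set (Fin t)).ncard := Set.ncard_image_le Set.finite_univ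
    _ = t := by rw [Set.ncard_univ]; simp

lemma exists_enum {n t : ℕ} (S : Set (Fin n)) (hS : S.ncard ≤ t) (a : Fin n) :
    ∃ f : ℕ → Fin n, ∀ z ∈ S, ∃ j, j < t ∧ f j = z := by
  have hfin : S.Finite := Set.toFinite S
  refine ⟨fun j => hfin.toFinset.toList.getD j a, ?_⟩
  intro z hz
  have hzL : z ∈ hfin.toFinset.toList := by
    rw [Finset.mem_toList, Set.Finite.mem_toFinset]
    exact hz
  obtain ⟨idx, hidx, hget⟩ := List.mem_iff_getElem.mp hzL
  have hlen : hfin.toFinset.toList.length = S.ncard := by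
    rw [Finset.length_toList, Set.ncard_eq_toFinset_card S hfin]
  refine ⟨idx, by omega, ?_⟩
  show hfin.toFinset.toList.getD idx a = z
  rw [List.getD_eq_getElem _ _ hidx]
  exact hget

end AtMostAux

open AtMostAux

/-- Let `|τ| = k`, let `π 0, …, π (ℓ-1)` enumerate a set `T` of `ℓ`
distinct `τ`-types, and let `m 0 ≤ … ≤ m (r-1)` (`1 ≤ r ≤ ℓ`) be positive integers. Then
there is an FO[τ] sentence `χ` of size at most `3·m_r + 6k·ℓ − 2k` such that for every
`τ`-model `M` of size `n ≥ m_r + 1` in which exactly the types of `T` are realized: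
`M ⊨ χ` iff for every `i`, at most `m i` points of `M` realize `π i`. -/
theorem at_most_formula (τ : Type) [Fintype τ] {ℓ r : ℕ} (hr : 1 ≤ r) (hrℓ : r ≤ ℓ)
    (π : Fin ℓ → Set τ) (hinj : Function.Injective π)
    (m : Fin r → ℕ) (hpos : ∀ i, 1 ≤ m i) (hasc : Monotone m) :
    ∃ χ : FO τ, χ.IsSentence ∧
      χ.size ≤ 3 * m ⟨r - 1, by omega⟩ + 6 * Fintype.card τ * ℓ - 2 * Fintype.card τ ∧
      ∀ (n : ℕ) (M : UModel τ n), m ⟨r - 1, by omega⟩ + 1 ≤ n →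
        (∀ σ : Set τ, 0 < typeCount M σ ↔ ∃ j, σ = π j) →
        (Sat M χ ↔ ∀ i : Fin r, typeCount M (π (Fin.castLE hrℓ i)) ≤ m i) := by
  set mt := m ⟨r - 1, by omega⟩ with hmt
  have hmt1 : 1 ≤ mt := hpos _
  by_cases hk0 : Fintype.card τ = 0
  · -- empty vocabulary: there is only one type, which everyone realizes
    have hemp : IsEmpty τ := Fintype.card_eq_zero_iff.mp hk0
    refine ⟨exs mt (.all 1 (disjL ((List.range' 1 (mt - 1)).map
        fun j => (FO.eq 1 (j + 2) : FO τ)) (.eq 1 2))), ?_, ?_, ?_⟩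
    · rw [FO.IsSentence, Finset.eq_empty_iff_forall_notMem]
      intro v hv
      obtain ⟨hv1, hv2⟩ := freeVars_exs _ _ hv
      simp only [FO.freeVars, Finset.mem_sdiff, Finset.mem_singleton] at hv1
      obtain ⟨hv3, hv4⟩ := hv1
      rcases freeVars_disjL _ _ hv3 with ⟨φ, hφ, hφv⟩ | hb
      · simp only [List.mem_map, List.mem_range'_1] at hφ
        obtain ⟨j, ⟨hj1, hj2⟩, rfl⟩ := hφ
        simp only [FO.freeVars, Finset.mem_insert, Finset.mem_singleton] at hφv
        rcases hφv with rfl | rfl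
        · exact hv4 rfl
        · omega
      · simp only [FO.freeVars, Finset.mem_insert, Finset.mem_singleton] at hb
        rcases hb with rfl | rfl
        · exact hv4 rfl
        · omega
    · rw [hk0]
      have hsum : (((List.range' 1 (mt - 1)).map fun j => (FO.eq 1 (j + 2) : FO τ)).map
          (fun φ => FO.size φ + 1)).sum = 2 * (mt - 1) := by
        rw [List.map_map]
        have : ((fun φ => FO.size φ + 1) ∘ fun j => (FO.eq 1 (j + 2) : FO τ)) =
            (fun (_ : ℕ) => 2) := by funext j; rfl
        rw [this, List.map_const', List.sum_replicate]
        simp [List.length_range']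
        omega
      simp only [size_exs, FO.size, size_disjL, hsum]
      omega
    · intro n M hn hreal
      have hiff1 : ¬ (∀ i : Fin r, typeCount M (π (Fin.castLE hrℓ i)) ≤ m i) := by
        intro hcnt
        have hall : {a : Fin n | M a = π (Fin.castLE hrℓ ⟨r - 1, by omega⟩)} = Set.univ := by
          ext a
          simp only [Set.mem_setOf_eq, Set.mem_univ, iff_true]
          rw [Set.eq_empty_of_isEmpty (M a), Set.eq_empty_of_isEmpty (π _)]
        have := hcnt ⟨r - 1, by omega⟩
        rw [typeCount, hall, Set.ncard_univ] at this
        simp only [Nat.card_eq_fintype_card, Fintype.card_fin] at this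
        omega
      rw [iff_false_intro hiff1, iff_false]
      intro hS
      have hnpos : 0 < n := by omega
      have h0 := hS (fun _ => ⟨0, hnpos⟩)
      obtain ⟨s', hlo, hhi, hsat⟩ := sat_exs_elim M _ _ _ h0
      have hcov : ∀ z : Fin n, ∃ j : Fin mt, (fun j : Fin mt => s' (j.val + 2)) j = z := by
        intro z
        have hz := hsat z
        rcases (sat_disjL M _ _ _).mp hz with ⟨φ, hφ, hφs⟩ | hb
        · simp only [List.mem_map, List.mem_range'_1] at hφ
          obtain ⟨j, ⟨hj1, hj2⟩, rfl⟩ := hφ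
          refine ⟨⟨j, by omega⟩, ?_⟩
          simp only [FO.sat] at hφs
          rw [Function.update_self, Function.update_of_ne (by omega : (j:ℕ) + 2 ≠ 1)] at hφs
          exact hφs.symm
        · simp only [FO.sat] at hb
          refine ⟨⟨0, by omega⟩, ?_⟩
          rw [Function.update_self, Function.update_of_ne (by omega : (2:ℕ) ≠ 1)] at hb
          exact hb.symm
      have := ncard_le_of_cover Set.univ _ (fun z _ => hcov z)
      rw [Set.ncard_univ] at this
      simp only [Nat.card_eq_fintype_card, Fintype.card_fin] at this
      omega
  · -- nonempty vocabulary
    have hk1 : 1 ≤ Fintype.card τ := by omega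
    set K := Fintype.card τ with hK
    set PP : ℕ → Set τ := fun j => if h : j < ℓ then π ⟨j, h⟩ else π ⟨0, by omega⟩ with hPPdef
    set mm : ℕ → ℕ := fun i => m ⟨min i (r - 1), by omega⟩ with hmmdef
    have hmono : Monotone mm := by
      intro a b hab
      exact hasc (by simp only [Fin.mk_le_mk]; omega)
    have hPinj : ∀ a b, a < ℓ → b < ℓ → PP a = PP b → a = b := by
      intro a b ha hb h
      rw [hPPdef] at h
      simp only [dif_pos ha, dif_pos hb] at h
      have := congrArg Fin.val (hinj h)
      simpa using this
    have hmmtop : mm (r - 1) = mt := by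
      rw [hmmdef]
      simp
      rfl
    have hmmlt : ∀ i (h : i < r), mm i = m ⟨i, h⟩ := by
      intro i h
      show m ⟨i ⊓ (r - 1), by omega⟩ = m ⟨i, h⟩
      exact congrArg m (Fin.ext (by simp; omega))
    have hPPlt : ∀ (i : Fin r), PP i.val = π (Fin.castLE hrℓ i) := by
      intro i
      rw [hPPdef]
      simp only [dif_pos (lt_of_lt_of_le i.isLt hrℓ)]
      rfl
    refine ⟨chi PP mm r ℓ, ?_, ?_, ?_⟩
    · rw [FO.IsSentence, Finset.eq_empty_iff_forall_notMem]
      intro v hv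
      simp only [chi, FO.freeVars, Finset.mem_sdiff, Finset.mem_singleton] at hv
      obtain ⟨hv1, hv0⟩ := hv
      obtain ⟨hv2, hv3⟩ := freeVars_exs _ _ hv1
      simp only [FO.freeVars, Finset.mem_sdiff, Finset.mem_singleton] at hv2
      obtain ⟨hv4, hv5⟩ := hv2
      rcases freeVars_mat PP mm r ℓ hmono hr (r - 1) le_rfl v hv4 with h | h | h
      · exact hv0 h
      · exact hv5 h
      · omega
    · have hsz := size_mat PP mm r ℓ hk1 hmono hr (r - 1) le_rfl
      rw [← hK] at hsz
      simp only [Nat.sub_self] at hsz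
      have hst0 : startIdx mm 0 = 0 := rfl
      rw [hst0] at hsz
      simp only [chi, FO.size, size_exs, hsz, hmmtop]
      have a1 : 6 * K * (r - 1) = 6 * (K * (r - 1)) := by ring
      have a2 : 2 * K * (ℓ - r) = 2 * (K * (ℓ - r)) := by ring
      have a3 : 6 * K * ℓ = 6 * (K * ℓ) := by ring
      have a4 : K * ℓ = K * (r - 1) + K * (ℓ - r) + K := by
        have h : (r - 1) + (ℓ - r) + 1 = ℓ := by omega
        calc K * ℓ = K * ((r - 1) + (ℓ - r) + 1) := by rw [h]
          _ = K * (r - 1) + K * (ℓ - r) + K := by ring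
      omega
    · intro n M hn hreal
      have hnpos : 0 < n := by omega
      have hTy : ∀ a : Fin n, ∃ j : Fin ℓ, M a = π j := by
        intro a
        apply (hreal (M a)).mp
        rw [typeCount]
        exact (Set.ncard_pos (Set.toFinite _)).mpr ⟨a, rfl⟩
      have hEx : ∀ j : Fin ℓ, ∃ a : Fin n, M a = π j := by
        intro j
        have := (hreal (π j)).mpr ⟨j, rfl⟩
        rw [typeCount] at this
        obtain ⟨a, ha⟩ := (Set.ncard_pos (Set.toFinite _)).mp this
        exact ⟨a, ha⟩
      constructor
      · -- Sat χ → counts small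
        intro hS i
        obtain ⟨y₀, hy₀⟩ := hEx (Fin.castLE hrℓ i)
        have h0 := hS (fun _ => y₀) y₀
        obtain ⟨s', hlo, hhi, hsat⟩ := sat_exs_elim M _ _ _ h0
        have hs'0 : s' 0 = y₀ := by
          rw [hlo 0 (by omega)]
          simp
        rw [typeCount]
        apply ncard_le_of_cover _ (fun j : Fin (m i) => s' (j.val + 2))
        intro z hz
        simp only [Set.mem_setOf_eq] at hz
        have hzsat := hsat z
        have h1 : M ((Function.update s' 1 z) 0) = PP i.val := by
          rw [Function.update_of_ne (by omega), hs'0, hy₀, hPPlt i]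
        have h2 : M ((Function.update s' 1 z) 1) = PP i.val := by
          rw [Function.update_self, hz, hPPlt i]
        have hext := sat_mat_extract M PP mm r ℓ hPinj hmono hr hrℓ (r - 1) le_rfl
          (Function.update s' 1 z) i.val i.isLt h1 h2 (by omega) hzsat
        obtain ⟨j, hj1, hj2, hj3⟩ := hext
        have hji : j < m i := by
          rw [hmmlt i.val i.isLt] at hj2
          simpa using hj2
        refine ⟨⟨j, hji⟩, ?_⟩
        show s' (j + 2) = z
        rw [Function.update_self] at hj3
        rw [Function.update_of_ne (by omega)] at hj3
        exact hj3.symm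
      · -- counts small → Sat χ
        intro hcnt s
        simp only [chi, FO.sat]
        intro a
        obtain ⟨p, hp⟩ := hTy a
        by_cases hpr : p.val < r
        · -- constrained type: enumerate its points
          have hcard : {z : Fin n | M z = π p}.ncard ≤ mm p.val := by
            rw [hmmlt p.val hpr]
            have := hcnt ⟨p.val, hpr⟩
            rw [typeCount] at this
            have hcast : π (Fin.castLE hrℓ ⟨p.val, hpr⟩) = π p := by
              congr 1
            rwa [hcast] at this
          obtain ⟨f, hf⟩ := exists_enum _ hcard a
          set s₁ := Function.update s 0 a with hs₁
          set s'' : ℕ → Fin n := fun v =>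
            if 2 ≤ v ∧ v < mm (r - 1) + 2 then f (v - 2) else s₁ v with hs''
          apply sat_exs_intro M _ _ s₁ s''
          · intro v hv
            rw [hs'']
            simp only [if_neg (by omega : ¬(2 ≤ v ∧ v < mm (r - 1) + 2))]
          · intro v hv
            rw [hs'']
            simp only [if_neg (by omega : ¬(2 ≤ v ∧ v < mm (r - 1) + 2))]
          · intro z
            apply sat_mat_intro M PP mm r ℓ hPinj hmono hr hrℓ (r - 1) le_rfl
            have hs0 : (Function.update s'' 1 z) 0 = a := by
              rw [Function.update_of_ne (by omega), hs'']
              simp only [if_neg (by omega : ¬(2 ≤ 0 ∧ 0 < mm (r - 1) + 2))]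
              rw [hs₁, Function.update_self]
            refine Or.inl ⟨p.val, by omega, hpr, ?_, ?_⟩
            · rw [hs0, hp, hPPdef]
              simp only [dif_pos p.isLt]
            · by_cases hz : M z = π p
              · obtain ⟨j, hj1, hj2⟩ := hf z hz
                refine Or.inr ⟨j, ?_, ?_, ?_⟩
                · rw [show r - 1 - (r - 1) = 0 by omega]
                  exact Nat.zero_le _
                · exact hj1
                · rw [Function.update_self, Function.update_of_ne (by omega), hs'']
                  have hjm : j < mm (r - 1) := by
                    calc j < mm p.val := hj1
                      _ ≤ mm (r - 1) := hmono (by omega)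
                  simp only [if_pos (show 2 ≤ j + 2 ∧ j + 2 < mm (r - 1) + 2 by omega)]
                  rw [show j + 2 - 2 = j by omega, hj2]
              · refine Or.inl ?_
                rw [Function.update_self, hPPdef]
                simp only [dif_pos p.isLt]
                exact hz
        · -- unconstrained type
          set s₁ := Function.update s 0 a with hs₁
          apply sat_exs_intro M _ _ s₁ s₁ (fun _ _ => rfl) (fun _ _ => rfl)
          intro z
          apply sat_mat_intro M PP mm r ℓ hPinj hmono hr hrℓ (r - 1) le_rfl
          refine Or.inr ⟨p.val, by omega, p.isLt, ?_⟩
          rw [Function.update_of_ne (by omega), hs₁, Function.update_self, hp, hPPdef]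
          simp only [dif_pos p.isLt]
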